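/- Let (V, →) be a directed graph whose balls are all finite, and suppose (V, →) is biconnected (every two vertices are mutually upstream of each other). If the connectivity dimension exists at some vertex v (i.e. the liminf and limsup of log|B(v,r)|/log r agree), then the connectivity dimension exists at every vertex and has the same value; i.e. the digraph is dimensionally homogeneous. -/

import Mathlib

open Filter Topology

/-- The ball of radius `r` around `v` in the digraph `E`. -/
def gBall {V : Type*} (E : V → V → Prop) (v : V) : ℕ → Set V
  | 0 => {v}
  | r + 1 => gBall E v r ∪ {u | ∃ w ∈ gBall E v r, E u w}

/-- Lower connectivity dimension at `v`. -/
noncomputable def dimLower {V : Type*} (E : V → V → Prop) (v : V) : EReal :=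
  Filter.liminf
    (fun r : ℕ => ((Real.log ((gBall E v r).ncard) / Real.log r : ℝ) : EReal)) Filter.atTop

/-- Upper connectivity dimension at `v`. -/
noncomputable def dimUpper {V : Type*} (E : V → V → Prop) (v : V) : EReal :=
  Filter.limsup
    (fun r : ℕ => ((Real.log ((gBall E v r).ncard) / Real.log r : ℝ) : EReal)) Filter.atTop

section Aux

variable {V : Type*} {E : V → V → Prop} {v w : V}

lemma gBall_mono (E : V → V → Prop) (v : V) : Monotone (gBall E v) := by
  apply monotone_nat_of_le_succ
  intro r
  exact Set.subset_union_left

lemma self_mem_gBall (E : V → V → Prop) (v : V) (r : ℕ) : v ∈ gBall E v r :=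
  gBall_mono E v (Nat.zero_le r) rfl

lemma mem_gBall_of_reflTransGen (h : Relation.ReflTransGen E w v) :
    ∃ d, w ∈ gBall E v d := by
  induction h using Relation.ReflTransGen.head_induction_on with
  | refl => exact ⟨0, rfl⟩
  | head hE _ ih =>
    obtain ⟨d, hd⟩ := ih
    exact ⟨d + 1, Or.inr ⟨_, hd, hE⟩⟩

lemma gBall_subset_shift (hd : w ∈ gBall E v d) (r : ℕ) :
    gBall E w r ⊆ gBall E v (d + r) := by
  induction r with
  | zero =>
      intro x hx
      obtain rfl : x = w := hx
      simpa using hd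
  | succ r ih =>
      intro x hx
      rcases hx with hx | ⟨y, hy, hE⟩
      · exact gBall_mono E v (Nat.le_succ _) (ih hx)
      · exact Or.inr ⟨y, ih hy, hE⟩

/-- The function whose liminf/limsup we take. -/
noncomputable def gF (E : V → V → Prop) (v : V) (r : ℕ) : ℝ :=
  Real.log ((gBall E v r).ncard) / Real.log r

lemma gBall_ncard_pos (hfin : ∀ (v : V) (r : ℕ), (gBall E v r).Finite) (v : V) (r : ℕ) :
    0 < (gBall E v r).ncard :=
  (Set.ncard_pos (hfin v r)).2 ⟨v, self_mem_gBall E v r⟩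

lemma gF_nonneg (hfin : ∀ (v : V) (r : ℕ), (gBall E v r).Finite) (v : V) (r : ℕ) :
    0 ≤ gF E v r := by
  apply div_nonneg _ (Real.log_natCast_nonneg r)
  apply Real.log_nonneg
  exact_mod_cast gBall_ncard_pos hfin v r

lemma dimLower_nonneg (hfin : ∀ (v : V) (r : ℕ), (gBall E v r).Finite) (v : V) :
    (0 : EReal) ≤ dimLower E v := by
  refine Filter.le_liminf_of_le (by isBoundedDefault) ?_
  filter_upwards with r
  exact_mod_cast gF_nonneg hfin v r

lemma dimUpper_nonneg (hfin : ∀ (v : V) (r : ℕ), (gBall E v r).Finite) (v : V) :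
    (0 : EReal) ≤ dimUpper E v :=
  le_trans (dimLower_nonneg hfin v) liminf_le_limsup

/-- From `gF E v s < a` (with `s ≥ 2`) deduce the polynomial bound on the ball. -/
lemma ncard_le_rpow (hfin : ∀ (v : V) (r : ℕ), (gBall E v r).Finite) {a : ℝ} {s : ℕ}
    (hs : 2 ≤ s) (h : gF E v s < a) :
    ((gBall E v s).ncard : ℝ) ≤ (s : ℝ) ^ a := by
  have hs' : (0:ℝ) < s := by positivity
  have hlogs : 0 < Real.log s := by
    apply Real.log_pos; exact_mod_cast Nat.lt_of_lt_of_le one_lt_two hs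
  have hN : (0:ℝ) < ((gBall E v s).ncard : ℝ) := by
    exact_mod_cast gBall_ncard_pos hfin v s
  have h1 : Real.log ((gBall E v s).ncard) < a * Real.log s := by
    have := (div_lt_iff₀ hlogs).mp h
    linarith
  calc ((gBall E v s).ncard : ℝ) = Real.exp (Real.log ((gBall E v s).ncard)) :=
        (Real.exp_log hN).symm
    _ ≤ Real.exp (Real.log s * a) := by
        apply Real.exp_le_exp.2; nlinarith
    _ = (s:ℝ) ^ a := (Real.rpow_def_of_pos hs' a).symm

/-- Core real estimate: if the ball at `v` of radius `d + r` is polynomially bounded by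
exponent `a`, then `gF E w r ≤ b` for all sufficiently large `r`. -/
lemma gF_le_of_bound (hfin : ∀ (v : V) (r : ℕ), (gBall E v r).Finite)
    {d : ℕ} (hsub : ∀ r, gBall E w r ⊆ gBall E v (d + r))
    {a b : ℝ} (ha : 0 < a) (hab : a < b) :
    ∃ R : ℕ, 2 ≤ R ∧ ∀ r, R ≤ r →
      ((gBall E v (d + r)).ncard : ℝ) ≤ ((d + r : ℕ) : ℝ) ^ a → gF E w r ≤ b := by
  set ε := b - a with hε
  have hεpos : 0 < ε := by simp [hε]; linarith
  set K := a * Real.log (1 + d) / ε with hK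
  refine ⟨max 2 (⌈Real.exp K⌉₊ + 1), le_max_left _ _, fun r hr hbound => ?_⟩
  have hr2 : 2 ≤ r := le_trans (le_max_left _ _) hr
  have hrK : Real.exp K ≤ (r : ℝ) := by
    have h1 : (⌈Real.exp K⌉₊ : ℝ) ≤ (r : ℝ) := by
      have : ⌈Real.exp K⌉₊ ≤ r := by
        have := le_trans (le_max_right 2 (⌈Real.exp K⌉₊ + 1)) hr
        omega
      exact_mod_cast this
    exact le_trans (Nat.le_ceil _) h1
  have hlogr : 0 < Real.log r := by
    apply Real.log_pos; exact_mod_cast Nat.lt_of_lt_of_le one_lt_two hr2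
  have hKlog : K ≤ Real.log r := by
    calc K = Real.log (Real.exp K) := (Real.log_exp K).symm
      _ ≤ Real.log r := Real.log_le_log (Real.exp_pos K) hrK
  have hNw : (0:ℝ) < ((gBall E w r).ncard : ℝ) := by
    exact_mod_cast gBall_ncard_pos hfin w r
  have hNle : ((gBall E w r).ncard : ℝ) ≤ ((gBall E v (d + r)).ncard : ℝ) := by
    exact_mod_cast Set.ncard_le_ncard (hsub r) (hfin v (d + r))
  -- log (d+r) ≤ log r + log (1+d)
  have hd1 : (0:ℝ) < 1 + d := by positivity
  have hr1 : (1:ℝ) ≤ (r:ℝ) := by exact_mod_cast le_trans one_le_two hr2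
  have hlogsum : Real.log ((d + r : ℕ) : ℝ) ≤ Real.log r + Real.log (1 + d) := by
    have h1 : ((d + r : ℕ) : ℝ) ≤ (r : ℝ) * (1 + d) := by
      push_cast; nlinarith
    calc Real.log ((d + r : ℕ) : ℝ) ≤ Real.log ((r : ℝ) * (1 + d)) := by
          apply Real.log_le_log _ h1
          have : (0:ℝ) < ((d + r : ℕ) : ℝ) := by push_cast; linarith
          exact this
      _ = Real.log r + Real.log (1 + d) := Real.log_mul (by linarith) (by linarith)
  have hdr0 : (0:ℝ) < ((d + r : ℕ) : ℝ) := by push_cast; linarith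
  have hlogN : Real.log ((gBall E w r).ncard : ℝ) ≤ a * Real.log ((d + r : ℕ) : ℝ) := by
    calc Real.log ((gBall E w r).ncard : ℝ) ≤ Real.log ((gBall E v (d + r)).ncard : ℝ) :=
          Real.log_le_log hNw hNle
      _ ≤ Real.log (((d + r : ℕ) : ℝ) ^ a) := by
          apply Real.log_le_log _ hbound
          exact_mod_cast gBall_ncard_pos hfin v (d + r)
      _ = a * Real.log ((d + r : ℕ) : ℝ) := Real.log_rpow hdr0 a
  have hlog1d : 0 ≤ Real.log (1 + d) := Real.log_nonneg (by push_cast; linarith)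
  have hKbound : a * Real.log (1 + d) ≤ ε * Real.log r := by
    have := (div_le_iff₀ hεpos).mp (le_of_eq hK.symm)
    have h2 : K * ε = a * Real.log (1 + d) := by
      rw [hK, div_mul_cancel₀ _ hεpos.ne']
    nlinarith [mul_le_mul_of_nonneg_right hKlog (le_of_lt hεpos)]
  rw [gF, div_le_iff₀ hlogr]
  calc Real.log ((gBall E w r).ncard : ℝ) ≤ a * Real.log ((d + r : ℕ) : ℝ) := hlogN
    _ ≤ a * (Real.log r + Real.log (1 + d)) := by nlinarith
    _ = a * Real.log r + a * Real.log (1 + d) := by ring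
    _ ≤ a * Real.log r + ε * Real.log r := by linarith
    _ = b * Real.log r := by rw [hε]; ring

lemma dims_le (hfin : ∀ (v : V) (r : ℕ), (gBall E v r).Finite)
    {d : ℕ} (hsub : ∀ r, gBall E w r ⊆ gBall E v (d + r)) :
    dimUpper E w ≤ dimUpper E v ∧ dimLower E w ≤ dimLower E v := by
  constructor
  · by_contra hlt
    push_neg at hlt
    obtain ⟨a, hva, haw⟩ := EReal.exists_between_coe_real hlt
    obtain ⟨b', hab', hbw⟩ := EReal.exists_between_coe_real haw
    obtain ⟨b, hab, hbb'⟩ := exists_between (EReal.coe_lt_coe_iff.mp hab')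
    have ha : 0 < a := by
      have := lt_of_le_of_lt (dimUpper_nonneg hfin v) hva
      exact_mod_cast this
    obtain ⟨R, hR2, hR⟩ := gF_le_of_bound (w := w) (v := v) hfin hsub ha hab
    have hev : ∀ᶠ s in atTop,
        ((Real.log ((gBall E v s).ncard) / Real.log s : ℝ) : EReal) < (a : EReal) :=
      Filter.eventually_lt_of_limsup_lt hva
    rw [Filter.eventually_atTop] at hev
    obtain ⟨M, hM⟩ := hev
    have hup : dimUpper E w ≤ (b : EReal) := by
      refine Filter.limsup_le_of_le (by isBoundedDefault) ?_
      rw [Filter.eventually_atTop]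
      refine ⟨max R M, fun r hr => ?_⟩
      have hrR : R ≤ r := le_trans (le_max_left _ _) hr
      have hrM : M ≤ d + r := le_trans (le_trans (le_max_right _ _) hr) (Nat.le_add_left _ _)
      have h1 : gF E v (d + r) < a := by
        have := hM (d + r) hrM
        exact_mod_cast this
      have h2 : ((gBall E v (d + r)).ncard : ℝ) ≤ ((d + r : ℕ) : ℝ) ^ a :=
        ncard_le_rpow hfin (by omega) h1
      have := hR r hrR h2
      exact_mod_cast this
    have hbE : (b : EReal) < dimUpper E w := lt_trans (EReal.coe_lt_coe_iff.mpr hbb') hbw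
    exact absurd (lt_of_lt_of_le hbE hup) (lt_irrefl _)
  · by_contra hlt
    push_neg at hlt
    obtain ⟨a, hva, haw⟩ := EReal.exists_between_coe_real hlt
    obtain ⟨b', hab', hbw⟩ := EReal.exists_between_coe_real haw
    obtain ⟨b, hab, hbb'⟩ := exists_between (EReal.coe_lt_coe_iff.mp hab')
    have ha : 0 < a := by
      have := lt_of_le_of_lt (dimLower_nonneg hfin v) hva
      exact_mod_cast this
    obtain ⟨R, hR2, hR⟩ := gF_le_of_bound (w := w) (v := v) hfin hsub ha hab
    have hfr : ∃ᶠ s in atTop,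
        ((Real.log ((gBall E v s).ncard) / Real.log s : ℝ) : EReal) < (a : EReal) :=
      Filter.frequently_lt_of_liminf_lt (by isBoundedDefault) hva
    have hlow : dimLower E w ≤ (b : EReal) := by
      refine Filter.liminf_le_of_frequently_le ?_ (by isBoundedDefault)
      rw [Filter.frequently_atTop] at hfr ⊢
      intro M
      obtain ⟨s, hs, hsa⟩ := hfr (M + R + d)
      refine ⟨s - d, by omega, ?_⟩
      have hds : d + (s - d) = s := by omega
      have h1 : gF E v s < a := by exact_mod_cast hsa
      have h2 : ((gBall E v s).ncard : ℝ) ≤ (s : ℝ) ^ a :=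
        ncard_le_rpow hfin (by omega) h1
      have h3 := hR (s - d) (by omega) (by rw [hds]; exact_mod_cast h2)
      exact_mod_cast h3
    have hbE : (b : EReal) < dimLower E w := lt_trans (EReal.coe_lt_coe_iff.mpr hbb') hbw
    exact absurd (lt_of_lt_of_le hbE hlow) (lt_irrefl _)

end Aux

/-- In a biconnected digraph with finite balls, if the connectivity dimension exists at
one vertex then it exists at every vertex, with the same value: the digraph is
dimensionally homogeneous. -/
theorem biconnected_dimensionally_homogeneous {V : Type*} (E : V → V → Prop)
    (hfin : ∀ (v : V) (r : ℕ), (gBall E v r).Finite)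
    (hbi : ∀ v w : V, Relation.ReflTransGen E v w)
    (v : V) (h : dimLower E v = dimUpper E v) :
    ∀ w : V, dimLower E w = dimUpper E w ∧ dimLower E w = dimLower E v := by
  intro w
  obtain ⟨d, hd⟩ := mem_gBall_of_reflTransGen (hbi w v)
  obtain ⟨d', hd'⟩ := mem_gBall_of_reflTransGen (hbi v w)
  have h1 := dims_le hfin (fun r => gBall_subset_shift hd r)
  have h2 := dims_le hfin (fun r => gBall_subset_shift hd' r)
  have hup : dimUpper E w = dimUpper E v := le_antisymm h1.1 h2.1
  have hlow : dimLower E w = dimLower E v := le_antisymm h1.2 h2.2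
  exact ⟨by rw [hlow, hup, h], hlow⟩
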